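/- For positive definite matrices A, B and a vector ξ, ⟨ξ, (A:B) ξ⟩ = inf { ⟨ξ₁, A ξ₁⟩ + ⟨ξ₂, B ξ₂⟩ : ξ = ξ₁ + ξ₂ }, where A:B = (A⁻¹ + B⁻¹)⁻¹ is the parallel sum. -/

import Mathlib

open scoped ComplexOrder
open Matrix

private lemma cross_left {n : Type*} [Fintype n] [DecidableEq n]
    {M : Matrix n n ℂ} (hM : M.IsHermitian) (hdet : IsUnit M.det) (w η : n → ℂ) :
    dotProduct (star (M⁻¹ *ᵥ w)) (M *ᵥ η) = dotProduct (star w) η := by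
  rw [star_mulVec, hM.inv.eq, dotProduct_mulVec, vecMul_vecMul,
    Matrix.nonsing_inv_mul _ hdet, vecMul_one]

private lemma cross_right {n : Type*} [Fintype n] [DecidableEq n]
    {M : Matrix n n ℂ} (hdet : IsUnit M.det) (w η : n → ℂ) :
    dotProduct (star η) (M *ᵥ (M⁻¹ *ᵥ w)) = dotProduct (star η) w := by
  rw [mulVec_mulVec, Matrix.mul_nonsing_inv _ hdet, one_mulVec]

theorem stmt_11 {n : Type*} [Fintype n] [DecidableEq n]
    (A B : Matrix n n ℂ) (hA : A.PosDef) (hB : B.PosDef) (ξ : n → ℂ) :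
    (dotProduct (star ξ) (((A⁻¹ + B⁻¹)⁻¹) *ᵥ ξ)).re =
      sInf {r : ℝ | ∃ ξ₁ ξ₂ : n → ℂ, ξ = ξ₁ + ξ₂ ∧
        r = (dotProduct (star ξ₁) (A *ᵥ ξ₁)).re +
            (dotProduct (star ξ₂) (B *ᵥ ξ₂)).re} := by
  have hAB : (A⁻¹ + B⁻¹).PosDef := hA.inv.add hB.inv
  have hC : ((A⁻¹ + B⁻¹)⁻¹).PosDef := hAB.inv
  set C := (A⁻¹ + B⁻¹)⁻¹ with hCdef
  have hAdet : IsUnit A.det := (Matrix.isUnit_iff_isUnit_det _).1 hA.isUnit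
  have hBdet : IsUnit B.det := (Matrix.isUnit_iff_isUnit_det _).1 hB.isUnit
  have hABdet : IsUnit (A⁻¹ + B⁻¹).det := (Matrix.isUnit_iff_isUnit_det _).1 hAB.isUnit
  set w := C *ᵥ ξ with hw
  set u := A⁻¹ *ᵥ w with hu
  set v := B⁻¹ *ᵥ w with hv
  -- the minimizing decomposition
  have hdecomp : u + v = ξ := by
    rw [hu, hv, ← add_mulVec, hw, mulVec_mulVec, Matrix.mul_nonsing_inv _ hABdet, one_mulVec]
  -- ⟨w, ξ⟩ = ⟨ξ, C ξ⟩
  have hwxi : dotProduct (star w) ξ = dotProduct (star ξ) (C *ᵥ ξ) := by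
    rw [hw, star_mulVec, hC.isHermitian.eq, ← dotProduct_mulVec]
  -- general expansion
  have key : ∀ η : n → ℂ,
      dotProduct (star (u + η)) (A *ᵥ (u + η)) +
        dotProduct (star (v - η)) (B *ᵥ (v - η)) =
      dotProduct (star ξ) (C *ᵥ ξ) +
        dotProduct (star η) (A *ᵥ η) +
        dotProduct (star η) (B *ᵥ η) := by
    intro η
    have hms : ∀ (M : Matrix n n ℂ), M.IsHermitian → ∀ a b : n → ℂ,
        dotProduct (star (M *ᵥ a)) b = dotProduct (star a) (M *ᵥ b) := by
      intro M hM a b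
      rw [star_mulVec, hM.eq, ← dotProduct_mulVec]
    have e1 := cross_left hA.isHermitian hAdet w η
    have e2 := cross_right (M := A) hAdet w η
    have e3 := cross_left hB.isHermitian hBdet w η
    have e4 := cross_right (M := B) hBdet w η
    have e5 := cross_right (M := A) hAdet w (A⁻¹ *ᵥ w)
    have e6 := cross_right (M := B) hBdet w (B⁻¹ *ᵥ w)
    have e7 : dotProduct (star (A⁻¹ *ᵥ w)) w + dotProduct (star (B⁻¹ *ᵥ w)) w
        = dotProduct (star ξ) (C *ᵥ ξ) := by
      rw [hms _ hA.isHermitian.inv, hms _ hB.isHermitian.inv, ← dotProduct_add,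
        ← hu, ← hv, hdecomp, hwxi]
    calc dotProduct (star (u + η)) (A *ᵥ (u + η)) +
        dotProduct (star (v - η)) (B *ᵥ (v - η))
        = (dotProduct (star u) (A *ᵥ u) + dotProduct (star u) (A *ᵥ η)
          + dotProduct (star η) (A *ᵥ u) + dotProduct (star η) (A *ᵥ η))
        + (dotProduct (star v) (B *ᵥ v) - dotProduct (star v) (B *ᵥ η)
          - dotProduct (star η) (B *ᵥ v) + dotProduct (star η) (B *ᵥ η)) := by
          simp only [star_add, star_sub, mulVec_add, mulVec_sub, add_dotProduct,
            sub_dotProduct, dotProduct_add, dotProduct_sub]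
          ring
      _ = _ := by
          rw [hu, hv]
          linear_combination e1 + e2 - e3 - e4 + e5 + e6 + e7
  set S : Set ℝ := {r : ℝ | ∃ ξ₁ ξ₂ : n → ℂ, ξ = ξ₁ + ξ₂ ∧
        r = (dotProduct (star ξ₁) (A *ᵥ ξ₁)).re +
            (dotProduct (star ξ₂) (B *ᵥ ξ₂)).re} with hS
  have hmem : (dotProduct (star ξ) (C *ᵥ ξ)).re ∈ S := by
    refine ⟨u, v, hdecomp.symm, ?_⟩
    have := key 0
    simp only [add_zero, sub_zero, mulVec_zero, dotProduct_zero] at this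
    rw [← this, Complex.add_re]
  have hlb : ∀ r ∈ S, (dotProduct (star ξ) (C *ᵥ ξ)).re ≤ r := by
    rintro r ⟨ξ₁, ξ₂, hsum, rfl⟩
    have hξ₁ : ξ₁ = u + (ξ₁ - u) := by ring
    have hξ₂ : ξ₂ = v - (ξ₁ - u) := by
      have : ξ₂ = ξ - ξ₁ := by rw [hsum]; ring
      rw [this, ← hdecomp]; ring
    have := key (ξ₁ - u)
    rw [← hξ₁, ← hξ₂] at this
    have hre := congrArg Complex.re this
    simp only [Complex.add_re] at hre
    have h1 : 0 ≤ (dotProduct (star (ξ₁ - u)) (A *ᵥ (ξ₁ - u))).re :=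
      hA.posSemidef.re_dotProduct_nonneg _
    have h2 : 0 ≤ (dotProduct (star (ξ₁ - u)) (B *ᵥ (ξ₁ - u))).re :=
      hB.posSemidef.re_dotProduct_nonneg _
    linarith
  have hbdd : BddBelow S := ⟨_, hlb⟩
  exact le_antisymm (le_csInf ⟨_, hmem⟩ hlb) (csInf_le hbdd hmem)
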